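/- Let V be a commutative unital quantale, F̂ a lax extension of F : Set → Set, κ a cardinal, and Y a set with |Y| ≤ κ. Let M = { μ^𝔨 | 𝔨 ∈ Fκ } be the set of κ-ary Moss liftings of F̂ determined by elements of Fκ. Then for every V-relation r : X ⇸ Y, F̂r = F̂^M r. -/

import Mathlib

/-!
Common framework: commutative unital quantales, `V`-relations, lax extensions,
predicate liftings, Moss liftings and the Kantorovich extension.
-/

universe u

namespace Paper

variable {V : Type u} [CommMonoid V] [CompleteLattice V]

/-- A `V`-relation `X ⇸ Y` is a map `X → Y → V`. -/
abbrev VRel (V : Type u) (X Y : Type u) : Type u := X → Y → V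

/-- Composition of `V`-relations: `(s · r)(x,z) = ⨆ y, r x y ⊗ s y z`. -/
def vcomp {X Y Z : Type u} (s : VRel V Y Z) (r : VRel V X Y) : VRel V X Z :=
  fun x z => ⨆ y, r x y * s y z

/-- The internal hom of the quantale: `hom u w = ⨆ {v | u ⊗ v ≤ w}`. -/
def qhom (u w : V) : V := sSup {v | u * v ≤ w}

/-- The lift `s ⊸ r` of `r : X ⇸ Z` along `s : Y ⇸ Z`. -/
def vlift {X Y Z : Type u} (s : VRel V Y Z) (r : VRel V X Z) : VRel V X Y :=
  fun x y => ⨅ z, qhom (s y z) (r x z)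

/-- The extension `r ⟜ s` of `r : Y ⇸ Z` along `s : Y ⇸ X`. -/
def vext {X Y Z : Type u} (r : VRel V Y Z) (s : VRel V Y X) : VRel V X Z :=
  fun x z => ⨅ y, qhom (s y x) (r y z)

/-- Converse of a `V`-relation. -/
def vconv {X Y : Type u} (r : VRel V X Y) : VRel V Y X := fun y x => r x y

/-- A function `f : X → Y` viewed as a `V`-relation `f_∘ : X ⇸ Y`. -/
def graph {X Y : Type u} (f : X → Y) : VRel V X Y :=
  fun x y => ⨆ _ : f x = y, (1 : V)

/-- The identity `V`-relation `1_X : X ⇸ X`. -/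
def idRel (V : Type u) [CommMonoid V] [CompleteLattice V] (X : Type u) : VRel V X X :=
  fun x y => ⨆ _ : x = y, (1 : V)

/-- The `V`-category structure `[r,s]` on `V`-relations `X ⇸ Y`. -/
def brkt {X Y : Type u} (r s : VRel V X Y) : V :=
  ⨅ (x : X), ⨅ (y : Y), qhom (r x y) (s x y)

/-- A lax extension of a `Set`-functor `F` to `V`-relations. -/
structure LaxExt (V : Type u) [CommMonoid V] [CompleteLattice V]
    (F : Type u → Type u) [Functor F] where
  ext : ∀ {X Y : Type u}, VRel V X Y → VRel V (F X) (F Y)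
  mono : ∀ {X Y : Type u} {r r' : VRel V X Y}, r ≤ r' → ext r ≤ ext r'
  lax_comp : ∀ {X Y Z : Type u} (r : VRel V X Y) (s : VRel V Y Z),
    vcomp (ext s) (ext r) ≤ ext (vcomp s r)
  map_le : ∀ {X Y : Type u} (f : X → Y),
    graph (Functor.map f : F X → F Y) ≤ ext (graph f)
  map_conv_le : ∀ {X Y : Type u} (f : X → Y),
    vconv (graph (Functor.map f : F X → F Y)) ≤ ext (vconv (graph f))

/-- A `V`-enriched lax extension. -/
def LaxExt.Enriched {F : Type u → Type u} [Functor F] (E : LaxExt V F) : Prop :=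
  ∀ (X Y : Type u) (r r' : VRel V X Y), brkt r r' ≤ brkt (E.ext r) (E.ext r')

/-- A `κ`-ary predicate lifting of `F`, viewed relationally: it sends a
`V`-relation `f : X ⇸ κ` naturally to a `V`-relation `μ f : F X ⇸ 1`. -/
structure PredLift (V : Type u) [CommMonoid V] [CompleteLattice V]
    (F : Type u → Type u) [Functor F] (κ : Type u) where
  app : ∀ {X : Type u}, VRel V X κ → VRel V (F X) PUnit
  natural : ∀ {X Y : Type u} (h : X → Y) (g : VRel V Y κ),
    app (vcomp g (graph h)) = vcomp (app g) (graph (Functor.map h : F X → F Y))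

/-- Monotonicity of a predicate lifting. -/
def PredLift.Monotone {F : Type u → Type u} [Functor F] {κ : Type u}
    (μ : PredLift V F κ) : Prop :=
  ∀ {X : Type u} {f f' : VRel V X κ}, f ≤ f' → μ.app f ≤ μ.app f'

/-- `V`-enrichment of a predicate lifting. -/
def PredLift.Enriched {F : Type u → Type u} [Functor F] {κ : Type u}
    (μ : PredLift V F κ) : Prop :=
  ∀ (X : Type u) (f f' : VRel V X κ), brkt f f' ≤ brkt (μ.app f) (μ.app f')

/-- A predicate lifting is induced by a lax extension `E` if `μ f = 𝔯 · E f`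
for some `𝔯 : F κ ⇸ 1`. -/
def PredLift.InducedBy {F : Type u → Type u} [Functor F] {κ : Type u}
    (μ : PredLift V F κ) (E : LaxExt V F) : Prop :=
  ∃ rr : VRel V (F κ) PUnit, ∀ (X : Type u) (f : VRel V X κ),
    μ.app f = vcomp rr (E.ext f)

/-- The (underlying assignment of the) Moss lifting `μ^𝔨` of a lax extension,
determined by an element `𝔨 ∈ F κ`: `μ^𝔨 f = (𝔨_∘)° · E f`. -/
def mossApp {F : Type u → Type u} [Functor F] (E : LaxExt V F) {κ : Type u}
    (k : F κ) (X : Type u) (f : VRel V X κ) : VRel V (F X) PUnit :=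
  vcomp (vconv (graph (fun _ : PUnit => k))) (E.ext f)

/-- The Kantorovich extension of a `κ`-ary predicate-lifting assignment. -/
def kant {F : Type u → Type u} [Functor F] {κ : Type u}
    (μ : ∀ (X : Type u), VRel V X κ → VRel V (F X) PUnit)
    {X Y : Type u} (r : VRel V X Y) : VRel V (F X) (F Y) :=
  ⨅ g : VRel V Y κ, vlift (μ Y g) (μ X (vcomp g r))

/-- The Kantorovich extension of a predicate lifting. -/
def PredLift.kant {F : Type u → Type u} [Functor F] {κ : Type u}
    (μ : PredLift V F κ) {X Y : Type u} (r : VRel V X Y) : VRel V (F X) (F Y) :=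
  Paper.kant (fun _ g => μ.app g) r

/-- The evaluation `V`-relation `ev_κ : V^κ ⇸ κ`. -/
def evRel (V : Type u) [CommMonoid V] [CompleteLattice V] (κ : Type u) :
    VRel V (κ → V) κ :=
  fun φ i => φ i

end Paper

open Paper
section
variable {V : Type u} [CommMonoid V] [CompleteLattice V] [IsQuantale V]

lemma qmul_bot (x : V) : x * (⊥:V) = ⊥ := by
  rw [← sSup_empty, IsQuantale.mul_sSup_distrib]; simp

lemma qbot_mul (x : V) : (⊥:V) * x = ⊥ := by rw [mul_comm]; exact qmul_bot x

omit [IsQuantale V] in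
lemma le_qhom {u v w : V} (h : u * v ≤ w) : v ≤ qhom u w := le_sSup h

lemma qhom_le_of_one_le {u w : V} (h : (1:V) ≤ u) : qhom u w ≤ w := by
  apply sSup_le; intro v hv
  calc v = 1 * v := (one_mul v).symm
    _ ≤ u * v := mul_le_mul_left h v
    _ ≤ w := hv

lemma mossApp_eval {F : Type u → Type u} [Functor F] (E : LaxExt V F) {κ : Type u}
    (k : F κ) (X : Type u) (f : VRel V X κ) (a : F X) (u : PUnit) :
    mossApp E k X f a u = E.ext f a k := by
  unfold mossApp vcomp vconv graph
  have h : ∀ b : F κ, E.ext f a b * ⨆ _ : k = b, (1:V) = ⨆ _ : k = b, E.ext f a b := by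
    intro b
    by_cases hb : k = b
    · simp [hb]
    · simp [hb, qmul_bot]
  simp only [h]
  simp

end

open Paper in
theorem laxext_eq_kantorovich_on_small_codomain {V : Type u} [CommMonoid V] [CompleteLattice V]
    [IsQuantale V] {F : Type u → Type u} [Functor F] [LawfulFunctor F]
    (E : LaxExt V F) {κ Y : Type u} (j : Y → κ) (hj : Function.Injective j)
    (X : Type u) (r : VRel V X Y) :
    E.ext r = ⨅ k : F κ, kant (mossApp E k) r := by
  apply le_antisymm
  · refine le_iInf fun k => le_iInf fun g => ?_
    intro a b
    refine le_iInf fun z => ?_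
    rw [mossApp_eval, mossApp_eval]
    apply le_qhom
    calc E.ext g b k * E.ext r a b = E.ext r a b * E.ext g b k := mul_comm _ _
      _ ≤ ⨆ b', E.ext r a b' * E.ext g b' k :=
          le_iSup (fun b' => E.ext r a b' * E.ext g b' k) b
      _ ≤ E.ext (vcomp g r) a k := E.lax_comp r g a k
  · intro a b
    have h0 : (⨅ k : F κ, kant (mossApp E k) r) ≤ kant (mossApp E (Functor.map j b)) r :=
      iInf_le _ _
    have h0' : kant (mossApp E (Functor.map j b)) r ≤
        vlift (mossApp E (Functor.map j b) Y (graph j))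
          (mossApp E (Functor.map j b) X (vcomp (graph j) r)) := iInf_le _ _
    have step1 : (⨅ k : F κ, kant (mossApp E k) r) a b ≤
        E.ext (vcomp (graph j) r) a (Functor.map j b) := by
      refine le_trans ((h0.trans h0') a b) ?_
      refine le_trans (iInf_le _ PUnit.unit) ?_
      rw [mossApp_eval, mossApp_eval]
      apply qhom_le_of_one_le
      refine le_trans ?_ (E.map_le j b (Functor.map j b))
      simp [graph]
    refine le_trans step1 ?_
    have h1 : (1:V) ≤ E.ext (vconv (graph j)) (Functor.map j b) b := by
      refine le_trans ?_ (E.map_conv_le j (Functor.map j b) b)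
      simp [vconv, graph]
    have h2 : vcomp (vconv (graph j)) (vcomp (graph j) r) ≤ r := by
      intro x y
      unfold vcomp vconv graph
      apply iSup_le; intro c
      rw [Quantale.iSup_mul_distrib]
      apply iSup_le; intro y'
      by_cases hc : j y' = c
      · by_cases hc2 : j y = c
        · have : y' = y := hj (hc.trans hc2.symm)
          subst this
          simp [hc, hc2]
        · simp [hc2, qmul_bot]
      · simp [hc, qmul_bot, qbot_mul]
    calc E.ext (vcomp (graph j) r) a (Functor.map j b)
        = E.ext (vcomp (graph j) r) a (Functor.map j b) * 1 := (mul_one _).symm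
      _ ≤ E.ext (vcomp (graph j) r) a (Functor.map j b) *
            E.ext (vconv (graph j)) (Functor.map j b) b := mul_le_mul_right h1 _
      _ ≤ ⨆ c, E.ext (vcomp (graph j) r) a c * E.ext (vconv (graph j)) c b :=
          le_iSup (fun c => E.ext (vcomp (graph j) r) a c * E.ext (vconv (graph j)) c b) _
      _ ≤ E.ext (vcomp (vconv (graph j)) (vcomp (graph j) r)) a b := E.lax_comp _ _ a b
      _ ≤ E.ext r a b := E.mono h2 a b
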